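/- Let (M,g,J) be an almost product singular semi-Riemannian manifold and K̃ the almost product Koszul form. Then for all smooth vector fields X,Y,Z on M and all f ∈ C^∞(M): (1) K̃ is additive and ℝ-linear in each of its three arguments; (2) K̃(fX,Y,Z) = f·K̃(X,Y,Z); (3) K̃(X,fY,Z) = f·K̃(X,Y,Z) + X(f)⟨Y,Z⟩; (4) K̃(X,Y,fZ) = f·K̃(X,Y,Z); (5) K̃(X,Y,Z) + K̃(X,Z,Y) = X⟨Y,Z⟩; (6) K̃(X,Y,Z) − K̃(Y,X,Z) = (1/2)⟨[X,Y],Z⟩ + (1/2)[K(X,JY,JZ) − K(Y,JX,JZ)]; (7) K̃(X,JY,JZ) = K̃(X,Y,Z). -/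
import Mathlib


noncomputable section

/-!
An algebraic (Koszul-style) model of singular semi-Riemannian manifolds, following
Stoica's "singular semi-Riemannian geometry".

* `M` is the set of points of the smooth manifold;
* `T p` is the tangent space at `p : M`;
* `IsFn h` says that `h : M → ℝ` is a smooth function, i.e. `h ∈ C^∞(M)`;
* `IsVF X` says that the section `X : ∀ p, T p` of the tangent bundle is a smooth
  vector field, i.e. `X ∈ Γ(TM)`;
* `D X h` is the derivative `X(h)` of the smooth function `h` along `X`;
* `bracket X Y` is the Lie bracket `[X,Y]` of vector fields;
* `g` is the metric: a smooth symmetric bilinear form on the tangent bundle, which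
  may be degenerate and of variable signature.
-/
structure SSRM (M : Type*) (T : M → Type*)
    [∀ p, AddCommGroup (T p)] [∀ p, Module ℝ (T p)] where
  /-- the smooth real functions `C^∞(M)` -/
  IsFn : (M → ℝ) → Prop
  /-- the smooth vector fields `Γ(TM)` -/
  IsVF : (∀ p, T p) → Prop
  /-- the directional derivative `X(h)` of a function along a vector field -/
  D : (∀ p, T p) → (M → ℝ) → M → ℝ
  /-- the Lie bracket of vector fields -/
  bracket : (∀ p, T p) → (∀ p, T p) → ∀ p, T p
  /-- the (possibly degenerate) metric, pointwise a bilinear form -/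
  g : ∀ p, T p →ₗ[ℝ] T p →ₗ[ℝ] ℝ
  g_symm : ∀ p u v, g p u v = g p v u
  fn_const : ∀ c : ℝ, IsFn fun _ => c
  fn_add : ∀ a b, IsFn a → IsFn b → IsFn (a + b)
  fn_mul : ∀ a b, IsFn a → IsFn b → IsFn (a * b)
  vf_add : ∀ X Y, IsVF X → IsVF Y → IsVF (X + Y)
  vf_smul : ∀ a X, IsFn a → IsVF X → IsVF fun p => a p • X p
  vf_smulR : ∀ (r : ℝ) X, IsVF X → IsVF (r • X)
  g_smooth : ∀ X Y, IsVF X → IsVF Y → IsFn fun p => g p (X p) (Y p)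
  D_smooth : ∀ X a, IsVF X → IsFn a → IsFn (D X a)
  D_add_fn : ∀ X a b, IsVF X → IsFn a → IsFn b → D X (a + b) = D X a + D X b
  D_mul_fn : ∀ X a b, IsVF X → IsFn a → IsFn b → D X (a * b) = D X a * b + a * D X b
  D_const : ∀ X (c : ℝ), IsVF X → D X (fun _ => c) = 0
  D_add_vf : ∀ X Y a, IsVF X → IsVF Y → IsFn a → D (X + Y) a = D X a + D Y a
  D_smul_vf : ∀ b X a, IsFn b → IsVF X → IsFn a →
    D (fun p => b p • X p) a = b * D X a
  bracket_smooth : ∀ X Y, IsVF X → IsVF Y → IsVF (bracket X Y)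
  bracket_antisymm : ∀ X Y, IsVF X → IsVF Y → bracket X Y = -bracket Y X
  bracket_add_left : ∀ X Y Z, IsVF X → IsVF Y → IsVF Z →
    bracket (X + Y) Z = bracket X Z + bracket Y Z
  bracket_leibniz : ∀ X a Y, IsVF X → IsFn a → IsVF Y →
    bracket X (fun p => a p • Y p)
      = (fun p => a p • bracket X Y p) + (fun p => D X a p • Y p)
  D_bracket : ∀ X Y a, IsVF X → IsVF Y → IsFn a →
    D (bracket X Y) a = D X (D Y a) - D Y (D X a)

namespace SSRM

variable {M : Type*} {T : M → Type*} [∀ p, AddCommGroup (T p)] [∀ p, Module ℝ (T p)]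

/-- `⟨X,Y⟩ = g(X,Y)`, as a function on `M`. -/
def gf (S : SSRM M T) (X Y : ∀ p, T p) : M → ℝ := fun p => S.g p (X p) (Y p)

/-- The Koszul form
`K(X,Y,Z) = (1/2){X⟨Y,Z⟩ + Y⟨Z,X⟩ − Z⟨X,Y⟩ − ⟨X,[Y,Z]⟩ + ⟨Y,[Z,X]⟩ + ⟨Z,[X,Y]⟩}`. -/
def K (S : SSRM M T) (X Y Z : ∀ p, T p) : M → ℝ :=
  ((1 : ℝ) / 2) • (S.D X (S.gf Y Z) + S.D Y (S.gf Z X) - S.D Z (S.gf X Y)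
    - S.gf X (S.bracket Y Z) + S.gf Y (S.bracket Z X) + S.gf Z (S.bracket X Y))

/-- The semi-symmetric metric Koszul form (w.r.t. the vector field `P`):
`K̄(X,Y,Z) = K(X,Y,Z) + g(Y,P)g(X,Z) − g(X,Y)g(P,Z)`. -/
def Kbar (S : SSRM M T) (P X Y Z : ∀ p, T p) : M → ℝ :=
  S.K X Y Z + S.gf Y P * S.gf X Z - S.gf X Y * S.gf P Z

/-- The semi-symmetric non-metric Koszul form (w.r.t. the vector field `P`):
`K̂(X,Y,Z) = K(X,Y,Z) + g(Y,P)g(X,Z)`. -/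
def Khat (S : SSRM M T) (P X Y Z : ∀ p, T p) : M → ℝ :=
  S.K X Y Z + S.gf Y P * S.gf X Z

/-- The Lie derivative of the metric:
`(L_Y g)(Z,X) = Y(g(Z,X)) − g([Y,Z],X) − g(Z,[Y,X])`. -/
def lieD (S : SSRM M T) (Y Z X : ∀ p, T p) : M → ℝ :=
  S.D Y (S.gf Z X) - S.gf (S.bracket Y Z) X - S.gf Z (S.bracket Y X)

/-- `W ∈ Γ₀(TM)`: a smooth vector field with `g(W,Y) = 0` for every vector field `Y`. -/
def Gamma0 (S : SSRM M T) (W : ∀ p, T p) : Prop :=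
  S.IsVF W ∧ ∀ Y, S.IsVF Y → S.gf W Y = 0

/-- A 1-form `ω` (given by its action `ω(Z)` on vector fields) belongs to `A^•(M)`:
at every point `p` the covector `ω_p` lies in the image of the flat map
`v ↦ g_p(v,·) : T_pM → T_p*M`. -/
def MemAsup (S : SSRM M T) (ω : (∀ p, T p) → M → ℝ) : Prop :=
  ∀ p : M, ∃ v : T p, ∀ Z, S.IsVF Z → ω Z p = S.g p v (Z p)

/-- `(M,g)` is radical-stationary: `K(X,Y,·) ∈ A^•(M)` for all vector fields `X,Y`. -/
def RadicalStationary (S : SSRM M T) : Prop :=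
  ∀ X Y, S.IsVF X → S.IsVF Y → S.MemAsup fun Z => S.K X Y Z

/-- `Y^♭ = g(Y,·)`, as a 1-form. -/
def flat (S : SSRM M T) (Y : ∀ p, T p) : (∀ p, T p) → M → ℝ := fun Z => S.gf Y Z

/-- The semi-symmetric metric lower covariant derivative: `∇̄♭_X Y = K̄(X,Y,·)`. -/
def nablaFlatBar (S : SSRM M T) (P X Y : ∀ p, T p) : (∀ p, T p) → M → ℝ :=
  fun Z => S.Kbar P X Y Z

/-- The semi-symmetric non-metric lower covariant derivative: `∇̂♭_X Y = K̂(X,Y,·)`. -/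
def nablaFlatHat (S : SSRM M T) (P X Y : ∀ p, T p) : (∀ p, T p) → M → ℝ :=
  fun Z => S.Khat P X Y Z

/-- Pointwise application of a bundle map `J : TM → TM` to a vector field. -/
def Jv (J : ∀ p, T p →ₗ[ℝ] T p) (X : ∀ p, T p) : ∀ p, T p := fun p => J p (X p)

/-- `J` is an almost product structure on `(M,g)`: a smooth bundle map `J : TM → TM`
with `J² = id` and `g(JX,JY) = g(X,Y)`. -/
structure IsAlmostProduct (S : SSRM M T) (J : ∀ p, T p →ₗ[ℝ] T p) : Prop where
  invol : ∀ p v, J p (J p v) = v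
  compat : ∀ p u v, S.g p (J p u) (J p v) = S.g p u v
  smooth : ∀ X, S.IsVF X → S.IsVF (Jv J X)

/-- The almost product Koszul form `K̃(X,Y,Z) = (1/2)[K(X,Y,Z) + K(X,JY,JZ)]`. -/
def Ktilde (S : SSRM M T) (J : ∀ p, T p →ₗ[ℝ] T p) (X Y Z : ∀ p, T p) : M → ℝ :=
  ((1 : ℝ) / 2) • (S.K X Y Z + S.K X (Jv J Y) (Jv J Z))

/-- The almost product lower covariant derivative: `∇̃♭_X Y = K̃(X,Y,·)`. -/
def nablaFlatTilde (S : SSRM M T) (J : ∀ p, T p →ₗ[ℝ] T p) (X Y : ∀ p, T p) :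
    (∀ p, T p) → M → ℝ :=
  fun Z => S.Ktilde J X Y Z

end SSRM

namespace SSRM

variable {M : Type*} {T : M → Type*} [∀ p, AddCommGroup (T p)] [∀ p, Module ℝ (T p)]
variable (S : SSRM M T)

lemma gf_symm (X Y : ∀ p, T p) : S.gf X Y = S.gf Y X :=
  funext fun p => S.g_symm p _ _

lemma isFn_gf (X Y : ∀ p, T p) (hX : S.IsVF X) (hY : S.IsVF Y) : S.IsFn (S.gf X Y) :=
  S.g_smooth X Y hX hY

lemma gf_add_left (X X' Y : ∀ p, T p) : S.gf (X + X') Y = S.gf X Y + S.gf X' Y := by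
  funext p; simp [gf]

lemma gf_add_right (X Y Y' : ∀ p, T p) : S.gf X (Y + Y') = S.gf X Y + S.gf X Y' := by
  funext p; simp [gf]

lemma gf_fsmul_left (f : M → ℝ) (X Y : ∀ p, T p) :
    S.gf (fun p => f p • X p) Y = f * S.gf X Y := by
  funext p; simp [gf]

lemma gf_fsmul_right (f : M → ℝ) (X Y : ∀ p, T p) :
    S.gf X (fun p => f p • Y p) = f * S.gf X Y := by
  funext p; simp [gf]

lemma bracket_add_right (X Y Z : ∀ p, T p) (hX : S.IsVF X) (hY : S.IsVF Y) (hZ : S.IsVF Z) :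
    S.bracket X (Y + Z) = S.bracket X Y + S.bracket X Z := by
  rw [S.bracket_antisymm X (Y + Z) hX (S.vf_add _ _ hY hZ),
    S.bracket_add_left Y Z X hY hZ hX,
    S.bracket_antisymm Y X hY hX, S.bracket_antisymm Z X hZ hX]
  funext p; simp; abel

lemma bracket_leibniz_left (a : M → ℝ) (X Y : ∀ p, T p)
    (ha : S.IsFn a) (hX : S.IsVF X) (hY : S.IsVF Y) :
    S.bracket (fun p => a p • X p) Y
      = (fun p => a p • S.bracket X Y p) - fun p => S.D Y a p • X p := by
  rw [S.bracket_antisymm _ Y (S.vf_smul a X ha hX) hY,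
    S.bracket_leibniz Y a X hY ha hX, S.bracket_antisymm Y X hY hX]
  funext p; simp; abel

/-- Properties of K: additivity in the first slot. -/
lemma K_add_left (X X' Y Z : ∀ p, T p)
    (hX : S.IsVF X) (hX' : S.IsVF X') (hY : S.IsVF Y) (hZ : S.IsVF Z) :
    S.K (X + X') Y Z = S.K X Y Z + S.K X' Y Z := by
  unfold K
  rw [S.D_add_vf X X' (S.gf Y Z) hX hX' (S.isFn_gf Y Z hY hZ),
    S.gf_add_right Z X X',
    S.D_add_fn Y (S.gf Z X) (S.gf Z X') hY (S.isFn_gf Z X hZ hX) (S.isFn_gf Z X' hZ hX'),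
    S.gf_add_left X X' Y,
    S.D_add_fn Z (S.gf X Y) (S.gf X' Y) hZ (S.isFn_gf X Y hX hY) (S.isFn_gf X' Y hX' hY),
    S.gf_add_left X X' (S.bracket Y Z),
    S.bracket_add_right Z X X' hZ hX hX',
    S.gf_add_right Y (S.bracket Z X) (S.bracket Z X'),
    S.bracket_add_left X X' Y hX hX' hY,
    S.gf_add_right Z (S.bracket X Y) (S.bracket X' Y)]
  funext p; simp; ring

lemma K_add_mid (X Y Y' Z : ∀ p, T p)
    (hX : S.IsVF X) (hY : S.IsVF Y) (hY' : S.IsVF Y') (hZ : S.IsVF Z) :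
    S.K X (Y + Y') Z = S.K X Y Z + S.K X Y' Z := by
  unfold K
  rw [S.gf_add_left Y Y' Z,
    S.D_add_fn X (S.gf Y Z) (S.gf Y' Z) hX (S.isFn_gf Y Z hY hZ) (S.isFn_gf Y' Z hY' hZ),
    S.D_add_vf Y Y' (S.gf Z X) hY hY' (S.isFn_gf Z X hZ hX),
    S.gf_add_right X Y Y',
    S.D_add_fn Z (S.gf X Y) (S.gf X Y') hZ (S.isFn_gf X Y hX hY) (S.isFn_gf X Y' hX hY'),
    S.bracket_add_left Y Y' Z hY hY' hZ,
    S.gf_add_right X (S.bracket Y Z) (S.bracket Y' Z),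
    S.gf_add_left Y Y' (S.bracket Z X),
    S.bracket_add_right X Y Y' hX hY hY',
    S.gf_add_right Z (S.bracket X Y) (S.bracket X Y')]
  funext p; simp; ring

lemma K_add_right (X Y Z Z' : ∀ p, T p)
    (hX : S.IsVF X) (hY : S.IsVF Y) (hZ : S.IsVF Z) (hZ' : S.IsVF Z') :
    S.K X Y (Z + Z') = S.K X Y Z + S.K X Y Z' := by
  unfold K
  rw [S.gf_add_right Y Z Z',
    S.D_add_fn X (S.gf Y Z) (S.gf Y Z') hX (S.isFn_gf Y Z hY hZ) (S.isFn_gf Y Z' hY hZ'),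
    S.gf_add_left Z Z' X,
    S.D_add_fn Y (S.gf Z X) (S.gf Z' X) hY (S.isFn_gf Z X hZ hX) (S.isFn_gf Z' X hZ' hX),
    S.D_add_vf Z Z' (S.gf X Y) hZ hZ' (S.isFn_gf X Y hX hY),
    S.bracket_add_right Y Z Z' hY hZ hZ',
    S.gf_add_right X (S.bracket Y Z) (S.bracket Y Z'),
    S.bracket_add_left Z Z' X hZ hZ' hX,
    S.gf_add_right Y (S.bracket Z X) (S.bracket Z' X),
    S.gf_add_left Z Z' (S.bracket X Y)]
  funext p; simp; ring

lemma K_fsmul_left (f : M → ℝ) (X Y Z : ∀ p, T p)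
    (hf : S.IsFn f) (hX : S.IsVF X) (hY : S.IsVF Y) (hZ : S.IsVF Z) :
    S.K (fun p => f p • X p) Y Z = f * S.K X Y Z := by
  unfold K
  rw [S.D_smul_vf f X (S.gf Y Z) hf hX (S.isFn_gf Y Z hY hZ),
    S.gf_fsmul_right f Z X, S.gf_fsmul_left f X Y,
    S.D_mul_fn Y f (S.gf Z X) hY hf (S.isFn_gf Z X hZ hX),
    S.D_mul_fn Z f (S.gf X Y) hZ hf (S.isFn_gf X Y hX hY),
    S.gf_fsmul_left f X (S.bracket Y Z),
    S.bracket_leibniz Z f X hZ hf hX,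
    S.gf_add_right Y,
    S.bracket_leibniz_left f X Y hf hX hY]
  have e1 : S.gf Y (fun p => f p • S.bracket Z X p) = f * S.gf Y (S.bracket Z X) :=
    S.gf_fsmul_right f Y (S.bracket Z X)
  have e2 : S.gf Y (fun p => S.D Z f p • X p) = S.D Z f * S.gf Y X :=
    S.gf_fsmul_right (S.D Z f) Y X
  rw [e1, e2, S.gf_symm Y X]
  funext p; simp [gf]; ring

lemma K_fsmul_mid (f : M → ℝ) (X Y Z : ∀ p, T p)
    (hf : S.IsFn f) (hX : S.IsVF X) (hY : S.IsVF Y) (hZ : S.IsVF Z) :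
    S.K X (fun p => f p • Y p) Z = f * S.K X Y Z + S.D X f * S.gf Y Z := by
  unfold K
  rw [S.gf_fsmul_left f Y Z,
    S.D_mul_fn X f (S.gf Y Z) hX hf (S.isFn_gf Y Z hY hZ),
    S.D_smul_vf f Y (S.gf Z X) hf hY (S.isFn_gf Z X hZ hX),
    S.gf_fsmul_right f X Y,
    S.D_mul_fn Z f (S.gf X Y) hZ hf (S.isFn_gf X Y hX hY),
    S.bracket_leibniz_left f Y Z hf hY hZ,
    S.gf_fsmul_left f Y (S.bracket Z X),
    S.bracket_leibniz X f Y hX hf hY,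
    S.gf_add_right Z]
  have e1 : S.gf Z (fun p => f p • S.bracket X Y p) = f * S.gf Z (S.bracket X Y) :=
    S.gf_fsmul_right f Z (S.bracket X Y)
  have e2 : S.gf Z (fun p => S.D X f p • Y p) = S.D X f * S.gf Z Y :=
    S.gf_fsmul_right (S.D X f) Z Y
  rw [e1, e2, S.gf_symm Z Y]
  funext p; simp [gf]; ring

lemma K_fsmul_right (f : M → ℝ) (X Y Z : ∀ p, T p)
    (hf : S.IsFn f) (hX : S.IsVF X) (hY : S.IsVF Y) (hZ : S.IsVF Z) :
    S.K X Y (fun p => f p • Z p) = f * S.K X Y Z := by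
  unfold K
  rw [S.gf_fsmul_right f Y Z,
    S.D_mul_fn X f (S.gf Y Z) hX hf (S.isFn_gf Y Z hY hZ),
    S.gf_fsmul_left f Z X,
    S.D_mul_fn Y f (S.gf Z X) hY hf (S.isFn_gf Z X hZ hX),
    S.D_smul_vf f Z (S.gf X Y) hf hZ (S.isFn_gf X Y hX hY),
    S.bracket_leibniz Y f Z hY hf hZ,
    S.gf_add_right X,
    S.bracket_leibniz_left f Z X hf hZ hX,
    S.gf_fsmul_left f Z (S.bracket X Y)]
  have e1 : S.gf X (fun p => f p • S.bracket Y Z p) = f * S.gf X (S.bracket Y Z) :=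
    S.gf_fsmul_right f X (S.bracket Y Z)
  have e2 : S.gf X (fun p => S.D Y f p • Z p) = S.D Y f * S.gf X Z :=
    S.gf_fsmul_right (S.D Y f) X Z
  rw [e1, e2, S.gf_symm X Z]
  funext p; simp [gf]; ring

lemma K_sum_symm (X Y Z : ∀ p, T p)
    (hX : S.IsVF X) (hY : S.IsVF Y) (hZ : S.IsVF Z) :
    S.K X Y Z + S.K X Z Y = S.D X (S.gf Y Z) := by
  unfold K
  rw [S.gf_symm Z Y, S.gf_symm Y X, S.gf_symm X Z,
    S.bracket_antisymm Z Y hZ hY, S.bracket_antisymm Y X hY hX,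
    S.bracket_antisymm X Z hX hZ]
  funext p; simp [gf]; ring

lemma K_sub_antisymm (X Y Z : ∀ p, T p)
    (hX : S.IsVF X) (hY : S.IsVF Y) (hZ : S.IsVF Z) :
    S.K X Y Z - S.K Y X Z = S.gf (S.bracket X Y) Z := by
  unfold K
  rw [S.gf_symm X Z, S.gf_symm Z Y, S.gf_symm Y X,
    S.bracket_antisymm X Z hX hZ, S.bracket_antisymm Z Y hZ hY,
    S.bracket_antisymm Y X hY hX, S.gf_symm (S.bracket X Y) Z]
  funext p; simp [gf]; ring

/-- J helpers -/
lemma Jv_add (J : ∀ p, T p →ₗ[ℝ] T p) (X Y : ∀ p, T p) :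
    Jv J (X + Y) = Jv J X + Jv J Y := by
  funext p; simp [Jv]

lemma Jv_fsmul (J : ∀ p, T p →ₗ[ℝ] T p) (f : M → ℝ) (X : ∀ p, T p) :
    Jv J (fun p => f p • X p) = fun p => f p • Jv J X p := by
  funext p; simp [Jv]

lemma gf_J_J (J : ∀ p, T p →ₗ[ℝ] T p) (hJ : S.IsAlmostProduct J) (X Y : ∀ p, T p) :
    S.gf (Jv J X) (Jv J Y) = S.gf X Y := by
  funext p; exact hJ.compat p _ _

lemma Jv_Jv (J : ∀ p, T p →ₗ[ℝ] T p) (hJ : S.IsAlmostProduct J) (X : ∀ p, T p) :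
    Jv J (Jv J X) = X := by
  funext p; exact hJ.invol p _

end SSRM

/-- Theorem 4.3: properties of the almost product Koszul form `K̃`
of an almost product singular semi-Riemannian manifold `(M,g,J)`. -/
theorem almostProductKoszul_properties
    {M : Type*} {T : M → Type*} [∀ p, AddCommGroup (T p)] [∀ p, Module ℝ (T p)]
    (S : SSRM M T) (J : ∀ p, T p →ₗ[ℝ] T p) (hJ : S.IsAlmostProduct J)
    (X Y Z : ∀ p, T p) (hX : S.IsVF X) (hY : S.IsVF Y) (hZ : S.IsVF Z)
    (f : M → ℝ) (hf : S.IsFn f) :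
    -- (1) additivity and ℝ-linearity in each of the three arguments
    (∀ X', S.IsVF X' → S.Ktilde J (X + X') Y Z = S.Ktilde J X Y Z + S.Ktilde J X' Y Z) ∧
    (∀ Y', S.IsVF Y' → S.Ktilde J X (Y + Y') Z = S.Ktilde J X Y Z + S.Ktilde J X Y' Z) ∧
    (∀ Z', S.IsVF Z' → S.Ktilde J X Y (Z + Z') = S.Ktilde J X Y Z + S.Ktilde J X Y Z') ∧
    (∀ r : ℝ, S.Ktilde J (r • X) Y Z = r • S.Ktilde J X Y Z) ∧
    (∀ r : ℝ, S.Ktilde J X (r • Y) Z = r • S.Ktilde J X Y Z) ∧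
    (∀ r : ℝ, S.Ktilde J X Y (r • Z) = r • S.Ktilde J X Y Z) ∧
    -- (2) `K̃(fX,Y,Z) = f·K̃(X,Y,Z)`
    S.Ktilde J (fun p => f p • X p) Y Z = f * S.Ktilde J X Y Z ∧
    -- (3) `K̃(X,fY,Z) = f·K̃(X,Y,Z) + X(f)⟨Y,Z⟩`
    S.Ktilde J X (fun p => f p • Y p) Z = f * S.Ktilde J X Y Z + S.D X f * S.gf Y Z ∧
    -- (4) `K̃(X,Y,fZ) = f·K̃(X,Y,Z)`
    S.Ktilde J X Y (fun p => f p • Z p) = f * S.Ktilde J X Y Z ∧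
    -- (5) `K̃(X,Y,Z) + K̃(X,Z,Y) = X⟨Y,Z⟩`
    S.Ktilde J X Y Z + S.Ktilde J X Z Y = S.D X (S.gf Y Z) ∧
    -- (6) `K̃(X,Y,Z) − K̃(Y,X,Z) = (1/2)⟨[X,Y],Z⟩ + (1/2)[K(X,JY,JZ) − K(Y,JX,JZ)]`
    S.Ktilde J X Y Z - S.Ktilde J Y X Z
      = ((1 : ℝ) / 2) • S.gf (S.bracket X Y) Z
        + ((1 : ℝ) / 2) • (S.K X (SSRM.Jv J Y) (SSRM.Jv J Z)
            - S.K Y (SSRM.Jv J X) (SSRM.Jv J Z)) ∧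
    -- (7) `K̃(X,JY,JZ) = K̃(X,Y,Z)`
    S.Ktilde J X (SSRM.Jv J Y) (SSRM.Jv J Z) = S.Ktilde J X Y Z := by
  
  have hJY : S.IsVF (SSRM.Jv J Y) := hJ.smooth Y hY
  have hJZ : S.IsVF (SSRM.Jv J Z) := hJ.smooth Z hZ
  -- general smooth-function homogeneity lemmas for K̃
  have ktl : ∀ f : M → ℝ, S.IsFn f →
      S.Ktilde J (fun p => f p • X p) Y Z = f * S.Ktilde J X Y Z := by
    intro f hf
    unfold SSRM.Ktilde
    rw [S.K_fsmul_left f X Y Z hf hX hY hZ,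
      S.K_fsmul_left f X (SSRM.Jv J Y) (SSRM.Jv J Z) hf hX hJY hJZ]
    funext p; simp; ring
  have ktm : ∀ f : M → ℝ, S.IsFn f →
      S.Ktilde J X (fun p => f p • Y p) Z
        = f * S.Ktilde J X Y Z + S.D X f * S.gf Y Z := by
    intro f hf
    unfold SSRM.Ktilde
    rw [SSRM.Jv_fsmul J f Y,
      S.K_fsmul_mid f X Y Z hf hX hY hZ,
      S.K_fsmul_mid f X (SSRM.Jv J Y) (SSRM.Jv J Z) hf hX hJY hJZ,
      S.gf_J_J J hJ Y Z]
    funext p; simp; ring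
  have ktr : ∀ f : M → ℝ, S.IsFn f →
      S.Ktilde J X Y (fun p => f p • Z p) = f * S.Ktilde J X Y Z := by
    intro f hf
    unfold SSRM.Ktilde
    rw [SSRM.Jv_fsmul J f Z,
      S.K_fsmul_right f X Y Z hf hX hY hZ,
      S.K_fsmul_right f X (SSRM.Jv J Y) (SSRM.Jv J Z) hf hX hJY hJZ]
    funext p; simp; ring
  refine ⟨?_, ?_, ?_, ?_, ?_, ?_, ?_, ktm f hf, ktr f hf, ?_, ?_, ?_⟩
  · -- additivity in X
    intro X' hX'
    unfold SSRM.Ktilde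
    rw [S.K_add_left X X' Y Z hX hX' hY hZ,
      S.K_add_left X X' (SSRM.Jv J Y) (SSRM.Jv J Z) hX hX' hJY hJZ]
    funext p; simp; ring
  · -- additivity in Y
    intro Y' hY'
    unfold SSRM.Ktilde
    rw [SSRM.Jv_add J Y Y',
      S.K_add_mid X Y Y' Z hX hY hY' hZ,
      S.K_add_mid X (SSRM.Jv J Y) (SSRM.Jv J Y') (SSRM.Jv J Z) hX hJY (hJ.smooth Y' hY') hJZ]
    funext p; simp; ring
  · -- additivity in Z
    intro Z' hZ'
    unfold SSRM.Ktilde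
    rw [SSRM.Jv_add J Z Z',
      S.K_add_right X Y Z Z' hX hY hZ hZ',
      S.K_add_right X (SSRM.Jv J Y) (SSRM.Jv J Z) (SSRM.Jv J Z') hX hJY hJZ (hJ.smooth Z' hZ')]
    funext p; simp; ring
  · -- scalar in X
    intro r
    have h := ktl (fun _ => r) (S.fn_const r)
    funext p
    exact congrFun h p
  · -- scalar in Y
    intro r
    have h := ktm (fun _ => r) (S.fn_const r)
    rw [S.D_const X r hX] at h
    funext p
    have h2 := congrFun h p
    simp only [Pi.add_apply, Pi.mul_apply, Pi.zero_apply, zero_mul, add_zero] at h2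
    exact h2
  · -- scalar in Z
    intro r
    have h := ktr (fun _ => r) (S.fn_const r)
    funext p
    exact congrFun h p
  · -- (2) f in X
    exact ktl f hf
  · -- (5)
    have s1 := S.K_sum_symm X Y Z hX hY hZ
    have s2 := S.K_sum_symm X (SSRM.Jv J Y) (SSRM.Jv J Z) hX hJY hJZ
    rw [S.gf_J_J J hJ Y Z] at s2
    unfold SSRM.Ktilde
    funext p
    have t1 := congrFun s1 p
    have t2 := congrFun s2 p
    simp only [Pi.add_apply, Pi.smul_apply, smul_eq_mul] at t1 t2 ⊢
    linarith
  · -- (6)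
    have t := S.K_sub_antisymm X Y Z hX hY hZ
    unfold SSRM.Ktilde
    funext p
    have t1 := congrFun t p
    simp only [Pi.add_apply, Pi.sub_apply, Pi.smul_apply, smul_eq_mul] at t1 ⊢
    linarith
  · -- (7)
    unfold SSRM.Ktilde
    rw [SSRM.Jv_Jv S J hJ Y, SSRM.Jv_Jv S J hJ Z]
    funext p
    simp only [Pi.add_apply, Pi.smul_apply, smul_eq_mul]
    ring
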